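/- Let P be a finite partially ordered set. A vector v ∈ ℝ^P spans an extreme ray of the order cone C(P) if and only if v = c·𝟙_U for some real number c > 0 and some nonempty connected upper set U of P, where 𝟙_U(x) = 1 if x ∈ U and 0 otherwise. -/

import Mathlib

/-- The order cone of a finite poset: nonnegative, nondecreasing real-valued functions. -/
def orderCone (P : Type*) [PartialOrder P] : Set (P → ℝ) :=
  {f | (∀ x, 0 ≤ f x) ∧ ∀ ⦃x y : P⦄, x ≤ y → f x ≤ f y}

/-- The Hasse graph of a poset: an edge between `x` and `y` iff one covers the other. -/
def hasseGraph (P : Type*) [PartialOrder P] : SimpleGraph P where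
  Adj x y := x ⋖ y ∨ y ⋖ x
  symm := by
    constructor
    intro x y h
    exact h.symm
  loopless := by
    constructor
    intro x h
    exact (h.elim id id).lt.ne rfl

/-- `v` spans an extreme ray of the convex cone `C`. -/
def SpansExtremeRay {E : Type*} [AddCommMonoid E] [SMul ℝ E] (C : Set E) (v : E) : Prop :=
  v ∈ C ∧ v ≠ 0 ∧ ∀ x y, x ∈ C → y ∈ C → v = x + y →
    (∃ α : ℝ, 0 ≤ α ∧ x = α • v) ∧ (∃ β : ℝ, 0 ≤ β ∧ y = β • v)

/-- `v` spans an extreme ray of the order cone `C(P)` iff `v` is a positive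
multiple of the indicator function of a nonempty connected upper set of `P`. -/
lemma indicator_mem_orderCone {P : Type*} [PartialOrder P] {c : ℝ} (hc : 0 ≤ c) {U : Set P}
    (hU : IsUpperSet U) : c • U.indicator (fun _ => (1:ℝ)) ∈ orderCone P := by
  constructor
  · intro x
    have : 0 ≤ U.indicator (fun _ => (1:ℝ)) x :=
      Set.indicator_nonneg (fun _ _ => zero_le_one) x
    simpa using mul_nonneg hc this
  · intro x y hxy
    by_cases hx : x ∈ U
    · have hy := hU hxy hx
      simp [Set.indicator_of_mem, hx, hy]
    · have : 0 ≤ U.indicator (fun _ => (1:ℝ)) y :=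
        Set.indicator_nonneg (fun _ _ => zero_le_one) y
      simp only [Pi.smul_apply, smul_eq_mul, Set.indicator_of_notMem hx, mul_zero]
      exact mul_nonneg hc this

lemma reachable_of_le {P : Type*} [Fintype P] [PartialOrder P] {U : Set P}
    (hU : IsUpperSet U) {b : P} (hb : b ∈ U) :
    ∀ a, ∀ ha : a ∈ U, a ≤ b →
      ((hasseGraph P).induce U).Reachable ⟨a, ha⟩ ⟨b, hb⟩ := by
  intro a
  induction a using WellFoundedGT.induction with
  | _ a ih =>
    intro ha hab
    rcases eq_or_lt_of_le hab with rfl | hlt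
    · rfl
    · obtain ⟨z, hz, hzb⟩ := exists_covBy_le_of_lt hlt
      have hzU : z ∈ U := hU hz.le ha
      have hadj : ((hasseGraph P).induce U).Adj ⟨a, ha⟩ ⟨z, hzU⟩ := Or.inl hz
      exact hadj.reachable.trans (ih z hz.lt hzU hzb)

lemma eq_of_reachable {V : Type*} {G : SimpleGraph V} {f : V → ℝ}
    (hf : ∀ p q, G.Adj p q → f p = f q) {p q : V} (h : G.Reachable p q) : f p = f q := by
  obtain ⟨w⟩ := h
  induction w with
  | nil => rfl
  | cons h w ih => exact (hf _ _ h).trans ih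

theorem spansExtremeRay_orderCone_iff
    (P : Type*) [Fintype P] [PartialOrder P] (v : P → ℝ) :
    SpansExtremeRay (orderCone P) v ↔
      ∃ c : ℝ, 0 < c ∧ ∃ U : Set P, U.Nonempty ∧ IsUpperSet U ∧
        ((hasseGraph P).induce U).Connected ∧
        v = c • U.indicator (fun _ => (1 : ℝ)) := by
  constructor
  · rintro ⟨⟨hpos, hmono⟩, hne, hext⟩
    set U : Set P := {p | 0 < v p} with hUdef
    have hvz : ∀ p, p ∉ U → v p = 0 := fun p hp =>
      le_antisymm (not_lt.mp hp) (hpos p)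
    have hUne : U.Nonempty := by
      by_contra h
      apply hne
      funext p
      exact hvz p (fun hp => h ⟨p, hp⟩)
    have hUupper : IsUpperSet U := fun p q hpq hp => lt_of_lt_of_le hp (hmono hpq)
    obtain ⟨u0, hu0, hmin⟩ := Set.exists_min_image U v (Set.toFinite U) hUne
    set c : ℝ := v u0 with hcdef
    have hc : 0 < c := hu0
    -- step 1 : v = c • 1_U
    have hvU : v = c • U.indicator (fun _ => (1:ℝ)) := by
      set x : P → ℝ := c • U.indicator (fun _ => (1:ℝ)) with hxdef
      have hxval : ∀ p, p ∈ U → x p = c := by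
        intro p hp
        simp [hxdef, Set.indicator_of_mem hp]
      have hxval' : ∀ p, p ∉ U → x p = 0 := by
        intro p hp
        simp [hxdef, Set.indicator_of_notMem hp]
      set y : P → ℝ := fun p => v p - x p with hydef
      have hynn : ∀ p, 0 ≤ y p := by
        intro p
        by_cases hp : p ∈ U
        · have := hmin p hp
          simp [hydef, hxval p hp]
          linarith
        · simp [hydef, hxval' p hp, hvz p hp]
      have hy : y ∈ orderCone P := by
        refine ⟨hynn, ?_⟩
        intro p q hpq
        by_cases hp : p ∈ U
        · have hq := hUupper hpq hp
          simp only [hydef, hxval p hp, hxval q hq]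
          linarith [hmono hpq]
        · simpa [hydef, hxval' p hp, hvz p hp] using hynn q
      have hsum : v = x + y := by
        funext p; simp [hydef]
      obtain ⟨⟨α, hα, hxα⟩, -⟩ :=
        hext x y (indicator_mem_orderCone hc.le hUupper) hy hsum
      have hα1 : α = 1 := by
        have h0 := congrFun hxα u0
        rw [hxval u0 hu0] at h0
        have : c = α * c := by simpa using h0
        exact mul_right_cancel₀ hc.ne' (by linarith)
      rw [hα1, one_smul] at hxα
      exact hxα.symm
    have hconn : ((hasseGraph P).induce U).Connected := by
      haveI : Nonempty U := ⟨⟨u0, hu0⟩⟩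
      refine SimpleGraph.Connected.mk ?_
      intro pp qq
      obtain ⟨p, hp⟩ := pp
      obtain ⟨q, hq⟩ := qq
      set A : Set P :=
        {r | ∃ hr : r ∈ U, ((hasseGraph P).induce U).Reachable ⟨p, hp⟩ ⟨r, hr⟩} with hAdef
      have hAsub : A ⊆ U := fun r hr => hr.1
      have hpA : p ∈ A := ⟨hp, SimpleGraph.Reachable.refl _⟩
      have hAupper : IsUpperSet A := by
        rintro r s hrs ⟨hr, hreach⟩
        have hsU : s ∈ U := hUupper hrs hr
        exact ⟨hsU, hreach.trans (reachable_of_le hUupper hsU r hr hrs)⟩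
      set B : Set P := U \ A with hBdef
      have hBupper : IsUpperSet B := by
        rintro r s hrs ⟨hrU, hrA⟩
        refine ⟨hUupper hrs hrU, fun hsA => hrA ?_⟩
        obtain ⟨hsU, hreach⟩ := hsA
        exact ⟨hrU, hreach.trans (reachable_of_le hUupper hsU r hrU hrs).symm⟩
      have hvval : ∀ r, r ∈ U → v r = c := by
        intro r hr
        rw [hvU]
        simp [Set.indicator_of_mem hr]
      set x : P → ℝ := c • A.indicator (fun _ => (1:ℝ)) with hxdef
      set y : P → ℝ := c • B.indicator (fun _ => (1:ℝ)) with hydef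
      have hsum : v = x + y := by
        funext r
        by_cases hrU : r ∈ U
        · by_cases hrA : r ∈ A
          · have hrB : r ∉ B := fun h => h.2 hrA
            simp [hxdef, hydef, Set.indicator_of_mem hrA, Set.indicator_of_notMem hrB,
              hvval r hrU]
          · have hrB : r ∈ B := ⟨hrU, hrA⟩
            simp [hxdef, hydef, Set.indicator_of_notMem hrA, Set.indicator_of_mem hrB,
              hvval r hrU]
        · have hrA : r ∉ A := fun h => hrU (hAsub h)
          have hrB : r ∉ B := fun h => hrU h.1
          simp [hxdef, hydef, Set.indicator_of_notMem hrA, Set.indicator_of_notMem hrB,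
            hvz r hrU]
      obtain ⟨⟨α, hα, hxα⟩, -⟩ :=
        hext x y (indicator_mem_orderCone hc.le hAupper)
          (indicator_mem_orderCone hc.le hBupper) hsum
      have hα1 : α = 1 := by
        have h0 := congrFun hxα p
        simp only [Pi.smul_apply, smul_eq_mul, hvval p hp] at h0
        have hxp : x p = c := by simp [hxdef, Set.indicator_of_mem hpA]
        rw [hxp] at h0
        have : c = α * c := by simpa using h0
        exact mul_right_cancel₀ hc.ne' (by linarith)
      rw [hα1, one_smul] at hxα
      have hqA : q ∈ A := by
        by_contra hqA
        have h0 := congrFun hxα q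
        rw [hvval q hq] at h0
        simp only [hxdef, Pi.smul_apply, Set.indicator_of_notMem hqA, smul_eq_mul,
          mul_zero] at h0
        exact hc.ne' h0.symm
      obtain ⟨hq', hreach⟩ := hqA
      exact hreach
    exact ⟨c, hc, U, hUne, hUupper, hconn, hvU⟩
  · rintro ⟨c, hc, U, hUne, hUupper, hconn, hv⟩
    obtain ⟨u0, hu0⟩ := hUne
    have hvval : ∀ p, p ∈ U → v p = c := by
      intro p hp
      rw [hv]; simp [Set.indicator_of_mem hp]
    have hvz : ∀ p, p ∉ U → v p = 0 := by
      intro p hp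
      rw [hv]; simp [Set.indicator_of_notMem hp]
    refine ⟨hv ▸ indicator_mem_orderCone hc.le hUupper, ?_, ?_⟩
    · intro h0
      have := congrFun h0 u0
      rw [hvval u0 hu0] at this
      exact hc.ne' this
    · intro x y hx hy hsum
      -- both x and y vanish outside U
      have hout : ∀ p, p ∉ U → x p = 0 ∧ y p = 0 := by
        intro p hp
        have h0 := congrFun hsum p
        rw [hvz p hp] at h0
        simp only [Pi.add_apply] at h0
        constructor <;> nlinarith [hx.1 p, hy.1 p]
      -- constancy across comparable pairs in U
      have hconst : ∀ f g : P → ℝ, f ∈ orderCone P → g ∈ orderCone P → v = f + g →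
          ∀ p q : P, p ∈ U → q ∈ U → p ≤ q → f p = f q := by
        intro f g hf hg hs p q hp hq hpq
        have h1 := congrFun hs p
        have h2 := congrFun hs q
        rw [hvval p hp] at h1
        rw [hvval q hq] at h2
        simp only [Pi.add_apply] at h1 h2
        have := hf.2 hpq
        have := hg.2 hpq
        linarith
      have hconstR : ∀ f g : P → ℝ, f ∈ orderCone P → g ∈ orderCone P → v = f + g →
          ∀ p q : P, ∀ hp : p ∈ U, ∀ hq : q ∈ U, f p = f q := by
        intro f g hf hg hs p q hp hq
        have hreach := hconn.preconnected ⟨p, hp⟩ ⟨q, hq⟩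
        exact eq_of_reachable (f := fun r : U => f r) (fun a b hab => by
          rcases hab with h | h
          · exact hconst f g hf hg hs a b a.2 b.2 h.le
          · exact (hconst f g hf hg hs b a b.2 a.2 h.le).symm) hreach
      refine ⟨⟨x u0 / c, div_nonneg (hx.1 u0) hc.le, ?_⟩,
              ⟨y u0 / c, div_nonneg (hy.1 u0) hc.le, ?_⟩⟩
      · funext p
        by_cases hp : p ∈ U
        · have := hconstR x y hx hy hsum u0 p hu0 hp
          rw [Pi.smul_apply, hvval p hp, smul_eq_mul, ← this]
          field_simp
        · rw [Pi.smul_apply, hvz p hp, smul_eq_mul, mul_zero, (hout p hp).1]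
      · have hsum' : v = y + x := by rw [hsum, add_comm]
        funext p
        by_cases hp : p ∈ U
        · have := hconstR y x hy hx hsum' u0 p hu0 hp
          rw [Pi.smul_apply, hvval p hp, smul_eq_mul, ← this]
          field_simp
        · rw [Pi.smul_apply, hvz p hp, smul_eq_mul, mul_zero, (hout p hp).2]
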